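/- Let L > 0 and let \phi : \mathbb{R} \to \mathbb{R} be continuously differentiable. Let u : \mathbb{R} \to \mathbb{R} be twice continuously differentiable with u''(x) = (\phi(x)^2 + \phi'(x))\,u(x) for all x \in [0,L], u(0) = 0 and u'(0) = 1. Then u(L) = \exp(\int_0^L \phi(x)\,dx) \cdot \int_0^L \exp(-2\int_0^x \phi(y)\,dy)\,dx. -/

import Mathlib

/-- For a C¹ superpotential `φ`, the solution `u` of
`u'' = (φ² + φ') u` on `[0, L]` with `u(0) = 0`, `u'(0) = 1` satisfies
`u(L) = e^{∫₀ᴸ φ} ∫₀ᴸ e^{-2∫₀ˣ φ} dx`, encoding the formula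
`det(-d²/dx² + φ² + φ') = 2 e^{∫₀ᴸ φ} ∫₀ᴸ e^{-2∫₀ˣ φ} dx`. -/
theorem stmt_12 (L : ℝ) (hL : 0 < L) (φ : ℝ → ℝ) (hφ : ContDiff ℝ 1 φ)
    (u : ℝ → ℝ) (hu : ContDiff ℝ 2 u)
    (hode : ∀ x ∈ Set.Icc 0 L, deriv (deriv u) x = (φ x ^ 2 + deriv φ x) * u x)
    (hu0 : u 0 = 0) (hu0' : deriv u 0 = 1) :
    u L = Real.exp (∫ x in (0:ℝ)..L, φ x) *
      ∫ x in (0:ℝ)..L, Real.exp (-2 * ∫ y in (0:ℝ)..x, φ y) := by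
  have hφc : Continuous φ := hφ.continuous
  set Φ : ℝ → ℝ := fun x => ∫ t in (0:ℝ)..x, φ t with hΦdef
  have hΦd : ∀ x : ℝ, HasDerivAt Φ (φ x) x := fun x =>
    intervalIntegral.integral_hasDerivAt_right (hφc.intervalIntegrable 0 x)
      (hφc.stronglyMeasurable.stronglyMeasurableAtFilter) hφc.continuousAt
  have hΦc : Continuous Φ := Differentiable.continuous (fun x => (hΦd x).differentiableAt)
  have hΦ0 : Φ 0 = 0 := intervalIntegral.integral_same
  have huD : Differentiable ℝ u := hu.differentiable (by norm_num)
  have hud : ∀ x : ℝ, HasDerivAt u (deriv u x) x := fun x => (huD x).hasDerivAt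
  have hdu : ContDiff ℝ 1 (deriv u) := by
    have := (contDiff_succ_iff_deriv (n := 1)).mp (by exact_mod_cast hu)
    exact this.2.2
  have hduD : Differentiable ℝ (deriv u) := hdu.differentiable one_ne_zero
  have hdud : ∀ x : ℝ, HasDerivAt (deriv u) (deriv (deriv u) x) x := fun x => (hduD x).hasDerivAt
  have hφd : ∀ x : ℝ, HasDerivAt φ (deriv φ x) x := fun x => ((hφ.differentiable one_ne_zero) x).hasDerivAt
  -- Step 1: h := (u' - φu) e^Φ is constant 1 on [0,L]
  set h : ℝ → ℝ := fun x => (deriv u x - φ x * u x) * Real.exp (Φ x) with hhdef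
  have hhd : ∀ x ∈ Set.Icc (0:ℝ) L, HasDerivAt h 0 x := by
    intro x hx
    have H : HasDerivAt h
        ((deriv (deriv u) x - (deriv φ x * u x + φ x * deriv u x)) * Real.exp (Φ x)
          + (deriv u x - φ x * u x) * (Real.exp (Φ x) * φ x)) x :=
      (((hdud x).sub ((hφd x).mul (hud x))).mul ((hΦd x).exp))
    have := hode x hx
    convert H using 1
    rw [this]; ring
  have hconst : ∀ x ∈ Set.Icc (0:ℝ) L, h x = 1 := by
    intro x hx
    have hsub : Set.uIcc (0:ℝ) x ⊆ Set.Icc (0:ℝ) L := by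
      rw [Set.uIcc_of_le hx.1]
      exact Set.Icc_subset_Icc le_rfl hx.2
    have := intervalIntegral.integral_eq_sub_of_hasDerivAt
      (f := h) (f' := fun _ => (0:ℝ)) (a := 0) (b := x)
      (fun t ht => hhd t (hsub ht)) (intervalIntegrable_const)
    simp at this
    have h0 : h 0 = 1 := by simp [hhdef, hu0, hu0', hΦ0]
    linarith [this, h0]
  -- hence u' - φ u = exp (-Φ) on [0,L]
  have hv : ∀ x ∈ Set.Icc (0:ℝ) L, deriv u x - φ x * u x = Real.exp (-Φ x) := by
    intro x hx
    have := hconst x hx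
    have hne : Real.exp (Φ x) ≠ 0 := Real.exp_ne_zero _
    simp only [hhdef] at this
    rw [Real.exp_neg]
    exact eq_inv_of_mul_eq_one_left this
  -- Step 2: g := exp(-Φ) u, g' = exp(-2Φ)
  set g : ℝ → ℝ := fun x => Real.exp (-Φ x) * u x with hgdef
  have hgd : ∀ x ∈ Set.Icc (0:ℝ) L, HasDerivAt g (Real.exp (-2 * Φ x)) x := by
    intro x hx
    have h1 : HasDerivAt (fun x => Real.exp (-Φ x)) (Real.exp (-Φ x) * (-φ x)) x :=
      (((hΦd x).neg).exp)
    have H := h1.mul (hud x)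
    have hveq := hv x hx
    have he : Real.exp (-2 * Φ x) =
        Real.exp (-Φ x) * (-φ x) * u x + Real.exp (-Φ x) * deriv u x := by
      have h2 : Real.exp (-2 * Φ x) = Real.exp (-Φ x) * Real.exp (-Φ x) := by
        rw [← Real.exp_add]; ring_nf
      rw [h2, ← hveq]; ring
    rw [he]; exact H
  have hcont2 : Continuous fun x => Real.exp (-2 * Φ x) := by continuity
  have hFTC := intervalIntegral.integral_eq_sub_of_hasDerivAt
      (f := g) (a := 0) (b := L)
      (fun t ht => hgd t (by rwa [Set.uIcc_of_le hL.le] at ht))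
      (hcont2.intervalIntegrable 0 L)
  have hg0 : g 0 = 0 := by simp [hgdef, hu0]
  rw [hg0, sub_zero] at hFTC
  have : u L = Real.exp (Φ L) * ∫ x in (0:ℝ)..L, Real.exp (-2 * Φ x) := by
    rw [hFTC]
    show u L = Real.exp (Φ L) * (Real.exp (-Φ L) * u L)
    rw [← mul_assoc, ← Real.exp_add, add_neg_cancel, Real.exp_zero, one_mul]
  simpa [hΦdef] using this
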